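/- For every n ≥ 2, the discriminant of F_n(x) satisfies disc(F_n) = (−1)^{n(n−1)/2} · (n / L_n^{n−1}) · 𝒫_n, where 𝒫_n = ∏_θ F̃_n(θ) with θ ranging over the nontrivial n-th roots of unity in ℂ. -/

import Mathlib

open Polynomial BigOperators

/-- `F n` is the truncated logarithmic polynomial `1 + x + x²/2 + ⋯ + xⁿ/n ∈ ℚ[x]`. -/
noncomputable def F (n : ℕ) : Polynomial ℚ :=
  1 + ∑ k ∈ Finset.Icc 1 n, Polynomial.C ((k : ℚ)⁻¹) * Polynomial.X ^ k

/-- `Ln n = lcm {1, 2, …, n}`. -/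
def Ln (n : ℕ) : ℕ := (Finset.Icc 1 n).lcm id

/-- `Ftilde n = Ln n • F n`, a polynomial with integer coefficients. -/
noncomputable def Ftilde (n : ℕ) : Polynomial ℚ := Polynomial.C ((Ln n : ℚ)) * F n

/-- The resultant `Res(P, Q)` of two polynomials over `ℚ`, computed in `ℂ` via the
product formula `Res(P,Q) = lc(P)^(deg Q) * ∏_{P(r)=0} Q(r)` (roots with multiplicity). -/
noncomputable def resC (P Q : Polynomial ℚ) : ℂ :=
  ((P.leadingCoeff : ℂ)) ^ Q.natDegree *
    ((P.map (algebraMap ℚ ℂ)).roots.map (fun r => (Q.map (algebraMap ℚ ℂ)).eval r)).prod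

/-- The discriminant `disc P = (−1)^(n(n−1)/2) ⬝ a_n⁻¹ ⬝ Res(P, P′)`, as a complex number. -/
noncomputable def discC (P : Polynomial ℚ) : ℂ :=
  (-1) ^ (P.natDegree.choose 2) * ((P.leadingCoeff : ℂ))⁻¹ * resC P (Polynomial.derivative P)

/-- `𝒫 n = ∏_θ F̃_n(θ)`, the product over the nontrivial `n`-th roots of unity in `ℂ`. -/
noncomputable def P (n : ℕ) : ℂ :=
  ∏ θ ∈ (Polynomial.nthRootsFinset n (1 : ℂ)).erase 1, (Polynomial.aeval θ) (Ftilde n)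

/-- `Xc m ω = ∏_{k=1}^{m−1} (1/m + ω^k + ω^{2k}/2 + ⋯ + ω^{(m−1)k}/(m−1))`. -/
noncomputable def Xc (m : ℕ) (ω : ℂ) : ℂ :=
  ∏ k ∈ Finset.Icc 1 (m - 1), ((m : ℂ)⁻¹ + ∑ j ∈ Finset.Icc 1 (m - 1), ω ^ (j * k) / (j : ℂ))

/-- `Y m = 1 + 1/2 + ⋯ + 1/m ∈ ℚ`. -/
def Y (m : ℕ) : ℚ := ∑ j ∈ Finset.Icc 1 m, (j : ℚ)⁻¹

/-! ### Auxiliary lemmas -/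

noncomputable def Gq (n : ℕ) : Polynomial ℚ := ∑ i ∈ Finset.range n, Polynomial.X ^ i

lemma derivative_F (n : ℕ) : Polynomial.derivative (F n) = Gq n := by
  unfold F Gq
  rw [map_add, derivative_one, zero_add, map_sum]
  rw [Finset.sum_congr rfl (g := fun k => (Polynomial.X : Polynomial ℚ) ^ (k - 1))
    (fun k hk => by
      rw [Finset.mem_Icc] at hk
      rw [derivative_C_mul_X_pow]
      have hk0 : (k : ℚ) ≠ 0 := by exact_mod_cast (by omega : k ≠ 0)
      rw [inv_mul_cancel₀ hk0, Polynomial.C_1, one_mul])]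
  apply Finset.sum_nbij' (i := fun k => k - 1) (j := fun i => i + 1) <;>
    simp +contextual [Finset.mem_Icc, Finset.mem_range] <;> omega

lemma coeff_F (n k : ℕ) (hk : 1 ≤ k) (hkn : k ≤ n) : (F n).coeff k = (k : ℚ)⁻¹ := by
  unfold F
  rw [Polynomial.coeff_add, Polynomial.coeff_one, if_neg (by omega), zero_add,
    Polynomial.finset_sum_coeff]
  simp only [Polynomial.coeff_C_mul, Polynomial.coeff_X_pow]
  rw [Finset.sum_eq_single k]
  · simp
  · intro b _ hb; simp [Ne.symm hb]
  · intro h; exact absurd (Finset.mem_Icc.mpr ⟨hk, hkn⟩) h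

lemma natDegree_F (n : ℕ) (hn : 1 ≤ n) : (F n).natDegree = n := by
  have hne : (F n).coeff n ≠ 0 := by
    rw [coeff_F n n hn le_rfl]
    exact inv_ne_zero (by exact_mod_cast (by omega : n ≠ 0))
  apply le_antisymm
  · unfold F
    apply Polynomial.natDegree_add_le_of_degree_le
    · simp
    · apply Polynomial.natDegree_sum_le_of_forall_le
      intro k hk
      rw [Finset.mem_Icc] at hk
      calc (Polynomial.C ((k : ℚ)⁻¹) * Polynomial.X ^ k).natDegree
          ≤ _ := Polynomial.natDegree_C_mul_le _ _
        _ ≤ n := by rw [Polynomial.natDegree_X_pow]; exact hk.2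
  · exact Polynomial.le_natDegree_of_ne_zero hne

lemma leadingCoeff_F (n : ℕ) (hn : 1 ≤ n) : (F n).leadingCoeff = (n : ℚ)⁻¹ := by
  rw [Polynomial.leadingCoeff, natDegree_F n hn, coeff_F n n hn le_rfl]

lemma F_ne_zero (n : ℕ) (hn : 1 ≤ n) : F n ≠ 0 := by
  intro h
  have := leadingCoeff_F n hn
  rw [h, Polynomial.leadingCoeff_zero] at this
  exact inv_ne_zero (by exact_mod_cast (by omega : n ≠ 0)) this.symm

lemma monic_Gq (n : ℕ) (hn : 1 ≤ n) : (Gq n).Monic :=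
  Polynomial.monic_geom_sum_X (by omega)

lemma natDegree_Gq (n : ℕ) (hn : 1 ≤ n) : (Gq n).natDegree = n - 1 := by
  apply le_antisymm
  · apply Polynomial.natDegree_sum_le_of_forall_le
    intro i hi
    rw [Finset.mem_range] at hi
    rw [Polynomial.natDegree_X_pow]; omega
  · apply Polynomial.le_natDegree_of_ne_zero
    unfold Gq
    rw [Polynomial.finset_sum_coeff]
    simp only [Polynomial.coeff_X_pow]
    rw [Finset.sum_eq_single (n-1)]
    · simp
    · intro b _ hb; simp [Ne.symm hb]
    · intro h; exact absurd (Finset.mem_range.mpr (by omega)) h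


lemma multiset_prod_const (N : Multiset ℂ) (c : ℂ) :
    (N.map (fun _ => c)).prod = c ^ Multiset.card N := by
  rw [Multiset.map_const', Multiset.prod_replicate]

lemma multiset_double_prod_sub (M N : Multiset ℂ) :
    (M.map (fun a => (N.map (fun b => a - b)).prod)).prod =
      (-1) ^ (Multiset.card M * Multiset.card N) *
        (N.map (fun b => (M.map (fun a => b - a)).prod)).prod := by
  rw [Multiset.prod_map_prod_map]
  have h : ∀ b : ℂ, (M.map (fun a => a - b)).prod
      = (-1) ^ Multiset.card M * (M.map (fun a => b - a)).prod := by
    intro b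
    have heq : (M.map (fun a => a - b)) = (M.map (fun a => (-1) * (b - a))) := by
      apply Multiset.map_congr rfl; intro a _; ring
    rw [heq, Multiset.prod_map_mul, multiset_prod_const]
  calc (N.map fun b => (M.map fun a => a - b).prod).prod
      = (N.map fun b => (-1 : ℂ) ^ Multiset.card M * (M.map fun a => b - a).prod).prod := by
        apply congrArg; apply Multiset.map_congr rfl; intro b _; exact h b
    _ = ((-1 : ℂ) ^ Multiset.card M) ^ Multiset.card N *
          (N.map fun b => (M.map fun a => b - a).prod).prod := by
        rw [Multiset.prod_map_mul, multiset_prod_const]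
    _ = _ := by rw [← pow_mul]

lemma res_swap (p q : Polynomial ℂ) (_hp : p ≠ 0) (_hq : q ≠ 0) :
    p.leadingCoeff ^ q.natDegree * (p.roots.map (fun a => q.eval a)).prod =
      (-1) ^ (p.natDegree * q.natDegree) *
        (q.leadingCoeff ^ p.natDegree * (q.roots.map (fun b => p.eval b)).prod) := by
  have hps : p.Splits := IsAlgClosed.splits p
  have hqs : q.Splits := IsAlgClosed.splits q
  have hcp : Multiset.card p.roots = p.natDegree := by
    have := Polynomial.Splits.natDegree_eq_card_roots hps
    rwa [eq_comm] at this
  have hcq : Multiset.card q.roots = q.natDegree := by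
    have := Polynomial.Splits.natDegree_eq_card_roots hqs
    rwa [eq_comm] at this
  have hevq : ∀ a : ℂ, q.eval a = q.leadingCoeff * (q.roots.map (fun b => a - b)).prod :=
    fun a => Polynomial.Splits.eval_eq_prod_roots hqs a
  have hevp : ∀ b : ℂ, p.eval b = p.leadingCoeff * (p.roots.map (fun a => b - a)).prod :=
    fun b => Polynomial.Splits.eval_eq_prod_roots hps b
  have hL : (p.roots.map (fun a => q.eval a)).prod =
      q.leadingCoeff ^ p.natDegree *
        (p.roots.map (fun a => (q.roots.map (fun b => a - b)).prod)).prod := by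
    calc (p.roots.map (fun a => q.eval a)).prod
        = (p.roots.map (fun a =>
            q.leadingCoeff * (q.roots.map (fun b => a - b)).prod)).prod := by
          apply congrArg; apply Multiset.map_congr rfl; intro a _; exact hevq a
      _ = _ := by rw [Multiset.prod_map_mul, multiset_prod_const, hcp]
  have hR : (q.roots.map (fun b => p.eval b)).prod =
      p.leadingCoeff ^ q.natDegree *
        (q.roots.map (fun b => (p.roots.map (fun a => b - a)).prod)).prod := by
    calc (q.roots.map (fun b => p.eval b)).prod
        = (q.roots.map (fun b =>
            p.leadingCoeff * (p.roots.map (fun a => b - a)).prod)).prod := by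
          apply congrArg; apply Multiset.map_congr rfl; intro b _; exact hevp b
      _ = _ := by rw [Multiset.prod_map_mul, multiset_prod_const, hcq]
  rw [hL, hR, multiset_double_prod_sub, hcp, hcq]
  ring

lemma roots_Gc (n : ℕ) (hn : 1 ≤ n) :
    ((Gq n).map (algebraMap ℚ ℂ)).roots = (Polynomial.nthRoots n (1 : ℂ)).erase 1 := by
  have hmap : (Gq n).map (algebraMap ℚ ℂ) = ∑ i ∈ Finset.range n, (Polynomial.X : Polynomial ℂ) ^ i := by
    unfold Gq
    rw [Polynomial.map_sum]
    simp
  have hgeom : ((Gq n).map (algebraMap ℚ ℂ)) * (Polynomial.X - Polynomial.C 1) =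
      Polynomial.X ^ n - Polynomial.C (1 : ℂ) := by
    rw [hmap, Polynomial.C_1]
    simpa using geom_sum_mul (Polynomial.X : Polynomial ℂ) n
  have hne : (Polynomial.X ^ n - Polynomial.C (1 : ℂ)) ≠ 0 :=
    Polynomial.X_pow_sub_C_ne_zero (by omega) 1
  have hmul : ((Gq n).map (algebraMap ℚ ℂ)).roots + {1} = Polynomial.nthRoots n (1 : ℂ) := by
    rw [Polynomial.nthRoots, ← hgeom,
      Polynomial.roots_mul (by rw [hgeom]; exact hne), Polynomial.roots_X_sub_C]
  have : Polynomial.nthRoots n (1 : ℂ) = 1 ::ₘ ((Gq n).map (algebraMap ℚ ℂ)).roots := by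
    rw [← hmul, add_comm, Multiset.singleton_add]
  rw [this, Multiset.erase_cons_head]

lemma Ln_ne_zero (n : ℕ) : Ln n ≠ 0 := by
  unfold Ln
  rw [Ne, Finset.lcm_eq_zero_iff]
  rintro ⟨x, hx, rfl⟩
  rw [Finset.mem_Icc] at hx
  omega

/-- For `n ≥ 2`,
`disc(F n) = (−1)^(n(n−1)/2) ⬝ (n / L_n^(n−1)) ⬝ 𝒫 n`. -/
theorem stmt12 (n : ℕ) (hn : 2 ≤ n) :
    discC (F n) = (-1) ^ (n.choose 2) * ((n : ℂ) / (Ln n : ℂ) ^ (n - 1)) * P n := by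
  have hn1 : 1 ≤ n := by omega
  have hn0 : n ≠ 0 := by omega
  have hnC : (n : ℂ) ≠ 0 := by exact_mod_cast hn0
  have hLC : (Ln n : ℂ) ≠ 0 := by exact_mod_cast Ln_ne_zero n
  have hprim : IsPrimitiveRoot (Complex.exp (2 * Real.pi * Complex.I / n)) n :=
    Complex.isPrimitiveRoot_exp n hn0
  have hcard : ((Polynomial.nthRootsFinset n (1 : ℂ)).erase 1).card = n - 1 := by
    rw [Finset.card_erase_of_mem (Polynomial.one_mem_nthRootsFinset (by omega)),
      hprim.card_nthRootsFinset]
  -- rewrite P n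
  have hP : P n = (Ln n : ℂ) ^ (n - 1) *
      ∏ θ ∈ (Polynomial.nthRootsFinset n (1 : ℂ)).erase 1, (Polynomial.aeval θ) (F n) := by
    unfold P Ftilde
    simp only [map_mul, Polynomial.aeval_C]
    rw [Finset.prod_mul_distrib, Finset.prod_const, hcard]
    norm_num
  -- the swap
  set Pc := (F n).map (algebraMap ℚ ℂ) with hPcdef
  set Qc := (Gq n).map (algebraMap ℚ ℂ) with hQcdef
  have hPc0 : Pc ≠ 0 := Polynomial.map_ne_zero (F_ne_zero n hn1)
  have hQc0 : Qc ≠ 0 := Polynomial.map_ne_zero (monic_Gq n hn1).ne_zero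
  have hlcP : Pc.leadingCoeff = (((n : ℚ)⁻¹ : ℚ) : ℂ) := by
    rw [hPcdef, Polynomial.leadingCoeff_map, leadingCoeff_F n hn1, eq_ratCast]
  have hlcQ : Qc.leadingCoeff = 1 := by
    rw [hQcdef, Polynomial.leadingCoeff_map, (monic_Gq n hn1).leadingCoeff, map_one]
  have hdP : Pc.natDegree = n := by rw [hPcdef, Polynomial.natDegree_map, natDegree_F n hn1]
  have hdQ : Qc.natDegree = n - 1 := by
    rw [hQcdef, Polynomial.natDegree_map, natDegree_Gq n hn1]
  have hswap := res_swap Pc Qc hPc0 hQc0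
  rw [hlcP, hlcQ, hdP, hdQ, one_pow] at hswap
  have hsign : ((-1 : ℂ)) ^ (n * (n - 1)) = 1 := by
    apply Even.neg_one_pow
    rw [mul_comm]
    have := Nat.even_mul_succ_self (n - 1)
    rwa [(by omega : n - 1 + 1 = n)] at this
  rw [hsign, one_mul, one_mul] at hswap
  -- identify the root product with P n's product
  have hnodup : (Polynomial.nthRoots n (1 : ℂ)).Nodup := hprim.nthRoots_one_nodup
  have hval : ((Polynomial.nthRootsFinset n (1 : ℂ)).erase 1).val =
      (Polynomial.nthRoots n (1 : ℂ)).erase 1 := by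
    classical
    rw [Finset.erase_val, Polynomial.nthRootsFinset_def, Multiset.toFinset_val,
      Multiset.dedup_eq_self.mpr hnodup]
  have hroots : Qc.roots = (Polynomial.nthRoots n (1 : ℂ)).erase 1 := roots_Gc n hn1
  have hprod : (Qc.roots.map (fun b => Pc.eval b)).prod =
      ∏ θ ∈ (Polynomial.nthRootsFinset n (1 : ℂ)).erase 1, (Polynomial.aeval θ) (F n) := by
    rw [Finset.prod_eq_multiset_prod, hval, hroots]
    apply congrArg
    apply Multiset.map_congr rfl
    intro b _
    rw [hPcdef, Polynomial.eval_map_algebraMap]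
  rw [hprod] at hswap
  -- put everything together
  unfold discC resC
  rw [derivative_F, natDegree_F n hn1, leadingCoeff_F n hn1]
  rw [show ((Gq n).map (algebraMap ℚ ℂ)) = Qc from rfl,
    show ((F n).map (algebraMap ℚ ℂ)) = Pc from rfl, natDegree_Gq n hn1]
  rw [show (Pc.roots.map (fun r => Qc.eval r)).prod = (Pc.roots.map (fun a => Qc.eval a)).prod
      from rfl, hswap, hP]
  have hcast : (((n : ℚ)⁻¹ : ℚ) : ℂ) = (n : ℂ)⁻¹ := by push_cast; ring
  rw [hcast, inv_inv]
  field_simp
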